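/- Let d ≥ 2 and let X be a cubical set in ℤ^d. Then X is regular if and only if for every c ∈ X the neighborhood N_X(c) is a regular cubical set. -/

import Mathlib

open Metric Set

/-- The closed unit cube centered at the lattice point `c`. -/
def cube (d : ℕ) (c : Fin d → ℤ) : Set (EuclideanSpace ℝ (Fin d)) :=
  {x | ∀ i, |x i - (c i : ℝ)| ≤ 1 / 2}

/-- The realization of a cubical set: the union of the closed unit cubes of its cells. -/
def realiz (d : ℕ) (X : Finset (Fin d → ℤ)) : Set (EuclideanSpace ℝ (Fin d)) :=
  ⋃ c ∈ X, cube d c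

/-- `x` is a regular point of the realization of `X`: either an interior point, or the
punctured intersection with every sufficiently small ball is contractible. -/
def RegPt (d : ℕ) (X : Finset (Fin d → ℤ)) (x : EuclideanSpace ℝ (Fin d)) : Prop :=
  x ∈ interior (realiz d X) ∨
    ∃ ε₀ > 0, ∀ ε : ℝ, 0 < ε → ε < ε₀ →
      ContractibleSpace ↥((Metric.ball x ε ∩ realiz d X) \ {x})

/-- A cubical set is regular if all points of its realization are regular. -/
def RegularCub (d : ℕ) (X : Finset (Fin d → ℤ)) : Prop :=
  ∀ x ∈ realiz d X, RegPt d X x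

/-- A clump: a nonempty (cubical) set which is regular with contractible realization. -/
def IsClump (d : ℕ) (X : Finset (Fin d → ℤ)) : Prop :=
  X.Nonempty ∧ RegularCub d X ∧ ContractibleSpace ↥(realiz d X)

/-- The neighborhood of a cell `c` in the cubical set `X`:
`{c} ∪ {y ∈ X : ‖y − c‖_∞ ≤ 1}`. -/
def nbhd (d : ℕ) (X : Finset (Fin d → ℤ)) (c : Fin d → ℤ) : Finset (Fin d → ℤ) :=
  insert c (X.filter fun y => ∀ i, |y i - c i| ≤ 1)

/-! ### Auxiliary real-arithmetic lemmas -/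

lemma aux_conv (t a b : ℝ) (ht0 : 0 ≤ t) (ht1 : t ≤ 1) (ha : |a| ≤ 1/2) (hb : |b| ≤ 1/2) :
    |b + (1-t)*(a-b)| ≤ 1/2 := by
  rw [abs_le] at *
  constructor <;> nlinarith [mul_nonneg (by linarith : (0:ℝ) ≤ 1-t) (by linarith : (0:ℝ) ≤ 1/2 - a),
    mul_nonneg (by linarith : (0:ℝ) ≤ 1-t) (by linarith : (0:ℝ) ≤ a + 1/2),
    mul_nonneg ht0 (by linarith : (0:ℝ) ≤ 1/2 - b), mul_nonneg ht0 (by linarith : (0:ℝ) ≤ b + 1/2)]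

lemma aux_cut (t a ε σ : ℝ) (ht0 : 0 ≤ t) (ht1 : t ≤ 1) (hσ : σ = 1 ∨ σ = -1)
    (ha : |a| ≤ 1/2) (hε0 : 0 ≤ ε) (hε1 : ε ≤ 1) :
    |σ/2 + (1-t)*(a - σ/2) - t*(ε/2)*σ| ≤ 1/2 := by
  rw [abs_le] at *
  have hmul : t * (ε/2) ≤ t * (1/2) := mul_le_mul_of_nonneg_left (by linarith) ht0
  have h0 : 0 ≤ t * (ε/2) := mul_nonneg ht0 (by linarith)
  rcases hσ with h | h <;> subst h <;> constructor <;>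
    nlinarith [mul_nonneg (by linarith : (0:ℝ) ≤ 1-t) (by linarith : (0:ℝ) ≤ 1/2 - a),
      mul_nonneg (by linarith : (0:ℝ) ≤ 1-t) (by linarith : (0:ℝ) ≤ a + 1/2)]

lemma aux_zero (t a ε σ : ℝ) (ht0 : 0 ≤ t) (hε : 0 < ε)
    (hc : (1-t)*a - t*(ε/2)*σ = 0) (hsign : σ*a ≤ 0) (ht1 : t ≤ 1) (hσ : σ = 1 ∨ σ = -1) :
    t = 0 := by
  have h1 : 0 ≤ (1-t) * (-(σ*a)) := mul_nonneg (by linarith) (by linarith)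
  have h2 : t * (ε/2) * (σ*σ) = (1-t)*(σ*a) := by linear_combination (-σ) * hc
  have hσσ : σ*σ = 1 := by rcases hσ with h | h <;> subst h <;> norm_num
  rw [hσσ, mul_one] at h2
  have h3 : t * (ε/2) ≤ 0 := by nlinarith
  nlinarith

lemma aux_ball (t n ε : ℝ) (ht0 : 0 ≤ t) (ht1 : t ≤ 1) (hn0 : 0 ≤ n) (hn : n < ε) (hε : 0 < ε) :
    (1-t)*n + t*(ε/2) < ε := by
  rcases eq_or_lt_of_le ht0 with h0 | hpos
  · rw [← h0]; simpa using hn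
  · have f1 : (1-t)*n ≤ (1-t)*ε := mul_le_mul_of_nonneg_left hn.le (by linarith)
    have f2 : 0 < t * ε := mul_pos hpos hε
    linarith

/-! ### Basic topological lemmas about cubes and realizations -/

lemma cube_closed (d : ℕ) (c : Fin d → ℤ) : IsClosed (cube d c) := by
  have h : cube d c = ⋂ i, {x : EuclideanSpace ℝ (Fin d) | |x i - (c i : ℝ)| ≤ 1/2} := by
    ext x; simp [cube, Set.mem_iInter, Set.mem_setOf_eq]
  rw [h]
  refine isClosed_iInter fun i => ?_
  have hci : Continuous fun x : EuclideanSpace ℝ (Fin d) => x i := (EuclideanSpace.proj i).continuous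
  exact isClosed_le (continuous_abs.comp (hci.sub continuous_const)) continuous_const

lemma mem_realiz {d : ℕ} {X : Finset (Fin d → ℤ)} {z : EuclideanSpace ℝ (Fin d)} :
    z ∈ realiz d X ↔ ∃ s ∈ X, z ∈ cube d s := by
  simp [realiz]

/-- Locality: near `x`, the realization consists only of cubes that contain `x`. -/
lemma locality (d : ℕ) (X : Finset (Fin d → ℤ)) (x : EuclideanSpace ℝ (Fin d)) :
    ∃ δ > 0, ∀ z, dist z x < δ → z ∈ realiz d X →
      ∃ s ∈ X, x ∈ cube d s ∧ z ∈ cube d s := by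
  set U : Set (EuclideanSpace ℝ (Fin d)) :=
    ⋃ s ∈ ((X : Set (Fin d → ℤ)) ∩ {s | x ∉ cube d s}), cube d s with hU
  have hUclosed : IsClosed U :=
    Set.Finite.isClosed_biUnion ((X.finite_toSet).inter_of_left _)
      (fun s _ => cube_closed d s)
  have hxU : x ∉ U := by
    intro hx
    rcases Set.mem_iUnion₂.mp hx with ⟨s, hs, hxs⟩
    exact hs.2 hxs
  rcases Metric.isOpen_iff.mp hUclosed.isOpen_compl x hxU with ⟨δ, hδ, hball⟩
  refine ⟨δ, hδ, fun z hz hzr => ?_⟩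
  rcases mem_realiz.mp hzr with ⟨s, hsX, hzs⟩
  by_cases hxs : x ∈ cube d s
  · exact ⟨s, hsX, hxs, hzs⟩
  · exact absurd (Set.mem_iUnion₂.mpr ⟨s, ⟨hsX, hxs⟩, hzs⟩) (hball (mem_ball.mpr hz))

/-- Regularity at `x` only depends on the collection of cells whose cube contains `x`. -/
lemma regpt_congr {d : ℕ} {X Y : Finset (Fin d → ℤ)} {x : EuclideanSpace ℝ (Fin d)}
    (hXY : ∀ s ∈ X, x ∈ cube d s → s ∈ Y) (hYX : ∀ s ∈ Y, x ∈ cube d s → s ∈ X) :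
    RegPt d X x → RegPt d Y x := by
  obtain ⟨δ₁, hδ₁, loc₁⟩ := locality d X x
  obtain ⟨δ₂, hδ₂, loc₂⟩ := locality d Y x
  have hδ : (0:ℝ) < min δ₁ δ₂ := lt_min hδ₁ hδ₂
  have hiff : ∀ z, dist z x < min δ₁ δ₂ → (z ∈ realiz d X ↔ z ∈ realiz d Y) := by
    intro z hz
    constructor
    · intro h
      obtain ⟨s, hs, hxs, hzs⟩ := loc₁ z (hz.trans_le (min_le_left _ _)) h
      exact mem_realiz.mpr ⟨s, hXY s hs hxs, hzs⟩
    · intro h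
      obtain ⟨s, hs, hxs, hzs⟩ := loc₂ z (hz.trans_le (min_le_right _ _)) h
      exact mem_realiz.mpr ⟨s, hYX s hs hxs, hzs⟩
  rintro (hint | ⟨ε₀, hε₀, hc⟩)
  · left
    have hsub : interior (realiz d X) ∩ ball x (min δ₁ δ₂) ⊆ realiz d Y := by
      intro z ⟨hz1, hz2⟩
      exact (hiff z (mem_ball.mp hz2)).mp (interior_subset hz1)
    exact interior_maximal hsub (isOpen_interior.inter isOpen_ball) ⟨hint, mem_ball_self hδ⟩
  · right
    refine ⟨min ε₀ (min δ₁ δ₂), lt_min hε₀ hδ, fun ε hε hlt => ?_⟩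
    have hEq : (ball x ε ∩ realiz d X) \ {x} = (ball x ε ∩ realiz d Y) \ {x} := by
      ext z
      simp only [Set.mem_diff, Set.mem_inter_iff, Set.mem_singleton_iff]
      constructor
      · rintro ⟨⟨hb, hr⟩, hne⟩
        exact ⟨⟨hb, (hiff z ((mem_ball.mp hb).trans (hlt.trans_le (min_le_right _ _)))).mp hr⟩, hne⟩
      · rintro ⟨⟨hb, hr⟩, hne⟩
        exact ⟨⟨hb, (hiff z ((mem_ball.mp hb).trans (hlt.trans_le (min_le_right _ _)))).mpr hr⟩, hne⟩
    rw [← hEq]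
    exact hc ε hε (hlt.trans_le (min_le_left _ _))

/-! ### The explicit contraction at "truncation boundary" points -/

set_option maxHeartbeats 1000000 in
lemma contract_lemma {d : ℕ} (Y : Finset (Fin d → ℤ)) (x : EuclideanSpace ℝ (Fin d))
    (i₀ : Fin d) (σ : ℝ) (hσ : σ = 1 ∨ σ = -1)
    (hkey : ∀ s ∈ Y, x ∈ cube d s → x i₀ - (s i₀ : ℝ) = σ / 2)
    (ε : ℝ) (hε : 0 < ε) (hε1 : ε ≤ 1)
    (hloc : ∀ z, dist z x < ε → z ∈ realiz d Y → ∃ s ∈ Y, x ∈ cube d s ∧ z ∈ cube d s)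
    (hx : x ∈ realiz d Y) :
    ContractibleSpace ↥((ball x ε ∩ realiz d Y) \ {x}) := by
  classical
  set e : EuclideanSpace ℝ (Fin d) := EuclideanSpace.single i₀ (1:ℝ) with he
  set H : ℝ → EuclideanSpace ℝ (Fin d) → EuclideanSpace ℝ (Fin d) :=
    fun t z => x + (1 - t) • (z - x) - (t * (ε/2) * σ) • e with hH
  set W : Set (EuclideanSpace ℝ (Fin d)) := (ball x ε ∩ realiz d Y) \ {x} with hW
  have hHcoord : ∀ (t : ℝ) (z : EuclideanSpace ℝ (Fin d)) j, H t z j =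
      x j + (1 - t) * (z j - x j) - (t * (ε/2) * σ) * (if j = i₀ then 1 else 0) := by
    intro t z j
    simp only [hH, he]
    rw [PiLp.sub_apply, PiLp.add_apply, PiLp.smul_apply, PiLp.smul_apply, PiLp.sub_apply,
      EuclideanSpace.single_apply, smul_eq_mul, smul_eq_mul]
  have habsσ : |σ| = 1 := by rcases hσ with h | h <;> simp [h]
  have hmem : ∀ t : ℝ, 0 ≤ t → t ≤ 1 → ∀ (z : EuclideanSpace ℝ (Fin d)) s,
      s ∈ Y → x ∈ cube d s → z ∈ cube d s → dist z x < ε →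
      (H t z ∈ cube d s ∧ dist (H t z) x < ε ∧ (H t z = x → t = 0 ∧ z = x)) := by
    intro t ht0 ht1 z s hsY hxs hzs hdz
    have hxi : x i₀ - (s i₀ : ℝ) = σ / 2 := hkey s hsY hxs
    have hz1 := abs_le.mp (hzs i₀)
    refine ⟨?_, ?_, ?_⟩
    · intro j
      rw [hHcoord]
      by_cases hj : j = i₀
      · rw [if_pos hj, mul_one, hj]
        have harg : x i₀ + (1 - t) * (z i₀ - x i₀) - (t * (ε/2) * σ) - (s i₀ : ℝ)
            = σ/2 + (1-t)*((z i₀ - (s i₀ : ℝ)) - σ/2) - t*(ε/2)*σ := by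
          have hxv : x i₀ = (s i₀ : ℝ) + σ/2 := by linarith
          rw [hxv]; ring
        rw [harg]
        exact aux_cut t _ ε σ ht0 ht1 hσ (hzs i₀) hε.le hε1
      · rw [if_neg hj, mul_zero, sub_zero]
        have harg : x j + (1 - t) * (z j - x j) - (s j : ℝ)
            = (x j - (s j : ℝ)) + (1-t)*((z j - (s j : ℝ)) - (x j - (s j : ℝ))) := by ring
        rw [harg]
        exact aux_conv t _ _ ht0 ht1 (hzs j) (hxs j)
    · have h1 : H t z - x = (1 - t) • (z - x) - (t * (ε/2) * σ) • e := by
        simp only [hH]; abel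
      have hnz : ‖z - x‖ < ε := by rw [← dist_eq_norm]; exact hdz
      have hne : ‖e‖ = 1 := by rw [he, EuclideanSpace.norm_single]; norm_num
      have hn1 : ‖(1 - t) • (z - x)‖ = (1 - t) * ‖z - x‖ := by
        rw [norm_smul, Real.norm_eq_abs, abs_of_nonneg (by linarith : (0:ℝ) ≤ 1 - t)]
      have hn2 : ‖(t * (ε/2) * σ) • e‖ = t * (ε/2) := by
        rw [norm_smul, hne, mul_one, Real.norm_eq_abs, abs_mul, abs_mul, habsσ,
          abs_of_nonneg ht0, abs_of_nonneg (by linarith : (0:ℝ) ≤ ε/2), mul_one]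
      have hbound : ‖H t z - x‖ ≤ (1 - t) * ‖z - x‖ + t * (ε/2) := by
        rw [h1]
        calc ‖(1 - t) • (z - x) - (t * (ε/2) * σ) • e‖
            ≤ ‖(1 - t) • (z - x)‖ + ‖(t * (ε/2) * σ) • e‖ := norm_sub_le _ _
          _ = (1 - t) * ‖z - x‖ + t * (ε/2) := by rw [hn1, hn2]
      rw [dist_eq_norm]
      have := aux_ball t ‖z - x‖ ε ht0 ht1 (norm_nonneg _) hnz hε
      linarith
    · intro hEq
      have hc : H t z i₀ = x i₀ := by rw [hEq]
      rw [hHcoord, if_pos rfl, mul_one] at hc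
      have hc' : (1-t)*(z i₀ - x i₀) - t*(ε/2)*σ = 0 := by linear_combination hc
      have hsign : σ*(z i₀ - x i₀) ≤ 0 := by
        rcases hσ with h | h <;> rw [h] at hxi ⊢ <;> nlinarith [hz1.1, hz1.2]
      have ht : t = 0 := aux_zero t _ ε σ ht0 hε hc' hsign ht1 hσ
      subst ht
      refine ⟨rfl, ?_⟩
      have h0 : H 0 z = z := by simp only [hH]; module
      rw [h0] at hEq
      exact hEq
  obtain ⟨s₀, hs₀, hxs₀⟩ := mem_realiz.mp hx
  have hdxx : dist x x < ε := by simpa using hε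
  have hp := hmem 1 zero_le_one le_rfl x s₀ hs₀ hxs₀ hxs₀ hdxx
  have hpW : H 1 x ∈ W := by
    refine ⟨⟨mem_ball.mpr hp.2.1, mem_realiz.mpr ⟨s₀, hs₀, hp.1⟩⟩, ?_⟩
    intro hmem1
    have := hp.2.2 (Set.mem_singleton_iff.mp hmem1)
    norm_num at this
  have hWmap : ∀ t : ℝ, 0 ≤ t → t ≤ 1 → ∀ z ∈ W, H t z ∈ W := by
    intro t ht0 ht1 z hz
    obtain ⟨⟨hb, hr⟩, hne⟩ := hz
    obtain ⟨s, hsY, hxs, hzs⟩ := hloc z (mem_ball.mp hb) hr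
    have h := hmem t ht0 ht1 z s hsY hxs hzs (mem_ball.mp hb)
    refine ⟨⟨mem_ball.mpr h.2.1, mem_realiz.mpr ⟨s, hsY, h.1⟩⟩, ?_⟩
    intro heq
    exact hne (Set.mem_singleton_iff.mpr (h.2.2 (Set.mem_singleton_iff.mp heq)).2)
  have hcont : Continuous fun q : unitInterval × ↥W =>
      H (q.1 : ℝ) (q.2 : EuclideanSpace ℝ (Fin d)) := by
    simp only [hH]
    fun_prop
  refine (contractible_iff_id_nullhomotopic _).mpr ⟨⟨H 1 x, hpW⟩, ⟨?_⟩⟩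
  refine ContinuousMap.Homotopy.mk
    ⟨fun q => ⟨H (q.1 : ℝ) (q.2 : EuclideanSpace ℝ (Fin d)),
      hWmap _ q.1.2.1 q.1.2.2 _ q.2.2⟩, hcont.subtype_mk _⟩ ?_ ?_
  · intro w
    apply Subtype.ext
    show H 0 (w : EuclideanSpace ℝ (Fin d)) = w
    simp only [hH]; module
  · intro w
    apply Subtype.ext
    show H 1 (w : EuclideanSpace ℝ (Fin d)) = H 1 x
    simp only [hH]; module

/-! ### The main theorem -/

/-- A cubical set is regular iff the neighborhood of each of its cells is a
regular cubical set. -/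
theorem regular_iff_nbhd_regular (d : ℕ) (hd : 2 ≤ d)
    (X : Finset (Fin d → ℤ)) (hX : X.Nonempty) :
    RegularCub d X ↔ ∀ c ∈ X, RegularCub d (nbhd d X c) := by
  classical
  have hnbX : ∀ c ∈ X, ∀ s ∈ nbhd d X c, s ∈ X := by
    intro c hc s hs
    rcases Finset.mem_insert.mp hs with h | h
    · exact h ▸ hc
    · exact (Finset.mem_filter.mp h).1
  constructor
  · -- forward direction
    intro hreg c hcX x hx
    have hxX : x ∈ realiz d X := by
      obtain ⟨s, hs, hxs⟩ := mem_realiz.mp hx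
      exact mem_realiz.mpr ⟨s, hnbX c hcX s hs, hxs⟩
    by_cases hcase : ∀ t ∈ X, x ∈ cube d t → ∀ i, |t i - c i| ≤ 1
    · exact regpt_congr
        (fun s hs hxs => Finset.mem_insert_of_mem (Finset.mem_filter.mpr ⟨hs, hcase s hs hxs⟩))
        (fun s hs _ => hnbX c hcX s hs) (hreg x hxX)
    · push_neg at hcase
      obtain ⟨t, htX, hxt, i₀, hti⟩ := hcase
      have h2 : (2:ℤ) ≤ |t i₀ - c i₀| := by omega
      set σ : ℝ := if 0 ≤ t i₀ - c i₀ then 1 else -1 with hσdef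
      have hσ : σ = 1 ∨ σ = -1 := by
        rw [hσdef]; split <;> simp
      have hkey : ∀ s ∈ nbhd d X c, x ∈ cube d s → x i₀ - (s i₀ : ℝ) = σ / 2 := by
        intro s hs hxs
        have hsc : |s i₀ - c i₀| ≤ 1 := by
          rcases Finset.mem_insert.mp hs with h | h
          · simp [h]
          · exact (Finset.mem_filter.mp h).2 i₀
        have hscR : |(s i₀ : ℝ) - (c i₀ : ℝ)| ≤ 1 := by exact_mod_cast (by push_cast [← Int.cast_abs] at *; exact_mod_cast hsc : |((s i₀ - c i₀ : ℤ) : ℝ)| ≤ 1)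
        have hx1 := abs_le.mp (hxs i₀)
        have hx2 := abs_le.mp (hxt i₀)
        have hs1 := abs_le.mp hscR
        by_cases hsgn : 0 ≤ t i₀ - c i₀
        · have hσ1 : σ = 1 := by rw [hσdef, if_pos hsgn]
          have htc : (2:ℤ) ≤ t i₀ - c i₀ := by rwa [abs_of_nonneg hsgn] at h2
          have htcR : (2:ℝ) ≤ (t i₀ : ℝ) - (c i₀ : ℝ) := by exact_mod_cast htc
          rw [hσ1]
          linarith
        · have hσ1 : σ = -1 := by rw [hσdef, if_neg hsgn]
          have htc : t i₀ - c i₀ ≤ -2 := by rw [abs_of_neg (lt_of_not_ge hsgn)] at h2; omega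
          have htcR : (t i₀ : ℝ) - (c i₀ : ℝ) ≤ -2 := by exact_mod_cast htc
          rw [hσ1]
          linarith
      obtain ⟨δ, hδ, hlocδ⟩ := locality d (nbhd d X c) x
      refine Or.inr ⟨min δ 1, lt_min hδ one_pos, fun ε hε hεlt => ?_⟩
      exact contract_lemma (nbhd d X c) x i₀ σ hσ hkey ε hε
        (le_of_lt (hεlt.trans_le (min_le_right _ _)))
        (fun z hz hzr => hlocδ z (hz.trans (hεlt.trans_le (min_le_left _ _))) hzr) hx
  · -- reverse direction
    intro h x hx
    obtain ⟨c, hcX, hxc⟩ := mem_realiz.mp hx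
    have hx' : x ∈ realiz d (nbhd d X c) :=
      mem_realiz.mpr ⟨c, Finset.mem_insert_self _ _, hxc⟩
    refine regpt_congr (fun s hs _ => hnbX c hcX s hs) ?_ (h c hcX x hx')
    intro s hsX hxs
    refine Finset.mem_insert_of_mem (Finset.mem_filter.mpr ⟨hsX, fun i => ?_⟩)
    have hr : |(s i : ℝ) - (c i : ℝ)| ≤ 1 := by
      calc |(s i : ℝ) - (c i : ℝ)| ≤ |(s i : ℝ) - x i| + |x i - (c i : ℝ)| := abs_sub_le _ _ _
        _ ≤ 1/2 + 1/2 := by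
            have h1 := hxs i
            have h2 := hxc i
            rw [abs_sub_comm] at h1
            linarith
        _ = 1 := by norm_num
    have : |((s i - c i : ℤ) : ℝ)| ≤ 1 := by push_cast; exact hr
    exact_mod_cast this
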